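/- Let M be a matroid on a finite linearly ordered ground set E and let B be a basis of M. Let F be the external part of B, i.e., the unique subset of E such that B ∩ F is a basis of M(F), Int_{M(F)}(B ∩ F) = ∅, Ext_{M(F)}(B ∩ F) = Ext_M(B), Int_{M/F}(B \ F) = Int_M(B), and Ext_{M/F}(B \ F) = ∅. Then F is the unique subset of E satisfying the following two recursive conditions: for every e ∈ B, e ∈ F if and only if there exists c ∈ C*(B;e) with c < e and c ∈ F; and for every e ∈ E \ B, e ∈ F if and only if every c ∈ C(B;e) with c < e satisfies c ∈ F. -/

import Mathlib

open Matroid Set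

namespace ActiveBij

variable {α : Type*}

/-- Deletion of a set of elements from a matroid. -/
def del (M : Matroid α) (D : Set α) : Matroid α := M ↾ (M.E \ D)

/-- Contraction of a set of elements of a matroid. -/
def con (M : Matroid α) (C : Set α) : Matroid α := (del M✶ C)✶

/-- The minor `M(G)/F` : restriction to `G` followed by contraction of `F`. -/
def minor (M : Matroid α) (G F : Set α) : Matroid α := con (M ↾ G) F

/-- A circuit of a matroid : a minimal dependent set. -/
def Cct (M : Matroid α) (C : Set α) : Prop := Minimal M.Dep C

/-- A cocircuit of a matroid : a circuit of the dual. -/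
def Cocct (M : Matroid α) (C : Set α) : Prop := Cct M✶ C

/-- The fundamental circuit of `e ∉ B` with respect to a base `B` :
the unique circuit contained in `B ∪ {e}`. -/
def fundCct (M : Matroid α) (B : Set α) (e : α) : Set α :=
  ⋂₀ {C | Cct M C ∧ C ⊆ insert e B}

/-- The fundamental cocircuit of `b ∈ B` with respect to a base `B` :
the unique cocircuit contained in `(E \ B) ∪ {b}`. -/
def fundCocct (M : Matroid α) (B : Set α) (b : α) : Set α :=
  ⋂₀ {C | Cocct M C ∧ C ⊆ insert b (M.E \ B)}

/-- The set of internally active elements of a base `B` :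
elements `b ∈ B` that are the minimum of their fundamental cocircuit. -/
def ActInt [LinearOrder α] (M : Matroid α) (B : Set α) : Set α :=
  {b ∈ B | IsLeast (fundCocct M B b) b}

/-- The set of externally active elements of a base `B` :
elements `e ∈ M.E \ B` that are the minimum of their fundamental circuit. -/
def ActExt [LinearOrder α] (M : Matroid α) (B : Set α) : Set α :=
  {e ∈ M.E \ B | IsLeast (fundCct M B e) e}

/-- A uniactive internal base : internal activity `1` and external activity `0`. -/
def UIntBase [LinearOrder α] (M : Matroid α) (B : Set α) : Prop :=
  M.IsBase B ∧ (ActInt M B).ncard = 1 ∧ (ActExt M B).ncard = 0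

/-- A uniactive external base : internal activity `0` and external activity `1`. -/
def UExtBase [LinearOrder α] (M : Matroid α) (B : Set α) : Prop :=
  M.IsBase B ∧ (ActInt M B).ncard = 0 ∧ (ActExt M B).ncard = 1

/-- `β(M)` : the number of uniactive internal bases. -/
noncomputable def beta [LinearOrder α] (M : Matroid α) : ℕ :=
  {B : Set α | UIntBase M B}.ncard

/-- `β*(M)` : the number of uniactive external bases. -/
noncomputable def betaStar [LinearOrder α] (M : Matroid α) : ℕ :=
  {B : Set α | UExtBase M B}.ncard

/-- A connected matroid : any two elements of the ground set lie on a common circuit. -/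
def Conn (M : Matroid α) : Prop :=
  M.E.Nonempty ∧ ∀ ⦃x y⦄, x ∈ M.E → y ∈ M.E →
    (x = y ∨ ∃ C, Cct M C ∧ x ∈ C ∧ y ∈ C)

/-- A matroid consisting of a single loop. -/
def IsLoopMatroid (M : Matroid α) : Prop := ∃ e, M.E = {e} ∧ M.Dep {e}

/-- A matroid consisting of a single coloop (isthmus). -/
def IsColoopMatroid (M : Matroid α) : Prop := ∃ e, M.E = {e} ∧ M.Indep {e}

/-- A flat : a subset of the ground set whose complement is a union of cocircuits. -/
def IsFlat (M : Matroid α) (F : Set α) : Prop :=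
  F ⊆ M.E ∧ ∃ S : Set (Set α), (∀ C ∈ S, Cocct M C) ∧ M.E \ F = ⋃₀ S

/-- A dual-flat : a union of circuits. -/
def IsDualFlat (M : Matroid α) (F : Set α) : Prop :=
  ∃ S : Set (Set α), (∀ C ∈ S, Cct M C) ∧ F = ⋃₀ S

/-- A cyclic flat : both a flat and a dual-flat. -/
def IsCyclicFlat (M : Matroid α) (F : Set α) : Prop :=
  IsFlat M F ∧ IsDualFlat M F

/-- The data of a filtration : `∅ = F'_ε ⊂ ⋯ ⊂ F'_0 = F_c = F_0 ⊂ ⋯ ⊂ F_ι = E`. -/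
structure Filtration (α : Type*) where
  ι : ℕ
  ε : ℕ
  F : Fin (ι + 1) → Set α
  F' : Fin (ε + 1) → Set α

/-- The `k`-th internal minor `M(F_k)/F_{k-1}` induced by a filtration. -/
def intMinor (M : Matroid α) (f : Filtration α) (k : Fin f.ι) : Matroid α :=
  minor M (f.F k.succ) (f.F k.castSucc)

/-- The `k`-th external minor `M(F'_{k-1})/F'_k` induced by a filtration. -/
def extMinor (M : Matroid α) (f : Filtration α) (k : Fin f.ε) : Matroid α :=
  minor M (f.F' k.castSucc) (f.F' k.succ)

/-- The filtration property : strictly nested subsets from `∅` to `M.E` through `F_c`,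
with the minima of the successive differences increasing on each side of `F_c`. -/
def IsFiltration [LinearOrder α] (M : Matroid α) (f : Filtration α) : Prop :=
  f.F' (Fin.last f.ε) = ∅ ∧
  f.F' 0 = f.F 0 ∧
  f.F (Fin.last f.ι) = M.E ∧
  (∀ k : Fin f.ι, f.F k.castSucc ⊂ f.F k.succ) ∧
  (∀ k : Fin f.ε, f.F' k.succ ⊂ f.F' k.castSucc) ∧
  (∀ j k : Fin f.ι, j < k → ∀ a b : α,
    IsLeast (f.F j.succ \ f.F j.castSucc) a →
    IsLeast (f.F k.succ \ f.F k.castSucc) b → a < b) ∧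
  (∀ j k : Fin f.ε, j < k → ∀ a b : α,
    IsLeast (f.F' j.castSucc \ f.F' j.succ) a →
    IsLeast (f.F' k.castSucc \ f.F' k.succ) b → a < b)

/-- A connected filtration : a filtration all of whose induced internal minors are
connected and not single loops, and all of whose induced external minors are connected
and not single coloops. -/
def IsConnFiltration [LinearOrder α] (M : Matroid α) (f : Filtration α) : Prop :=
  IsFiltration M f ∧
  (∀ k : Fin f.ι, Conn (intMinor M f k) ∧ ¬ IsLoopMatroid (intMinor M f k)) ∧
  (∀ k : Fin f.ε, Conn (extMinor M f k) ∧ ¬ IsColoopMatroid (extMinor M f k))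

/-- An active filtration of a base `B` : a filtration such that `B` induces a uniactive
internal base of each internal minor and a uniactive external base of each external minor. -/
def IsActiveFiltration [LinearOrder α] (M : Matroid α) (B : Set α) (f : Filtration α) : Prop :=
  IsFiltration M f ∧
  (∀ k : Fin f.ι, UIntBase (intMinor M f k) (B ∩ (f.F k.succ \ f.F k.castSucc))) ∧
  (∀ k : Fin f.ε, UExtBase (extMinor M f k) (B ∩ (f.F' k.castSucc \ f.F' k.succ)))

/-- The subset `F(X)` attached to a base `B` and a set `X` of internally active elements :
`B ∩ F` is a base of `M(F)`, the activities of the induced bases of `M(F)` and `M/F`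
split those of `B`, with `Int` of the contraction part equal to `X`. -/
def DecompSet [LinearOrder α] (M : Matroid α) (B X F : Set α) : Prop :=
  F ⊆ M.E ∧
  (M ↾ F).IsBase (B ∩ F) ∧
  ActInt (M ↾ F) (B ∩ F) = ActInt M B \ X ∧
  ActExt (M ↾ F) (B ∩ F) = ActExt M B ∧
  ActInt (con M F) (B \ F) = X ∧
  ActExt (con M F) (B \ F) = ∅

/-- The dual of a filtration : complement every subset and exchange the two sides. -/
def dualFil (M : Matroid α) (f : Filtration α) : Filtration α :=
  ⟨f.ε, f.ι, fun k => M.E \ f.F' k, fun k => M.E \ f.F k⟩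

/-- The set of subsets occurring in a filtration. -/
def termsOf (f : Filtration α) : Set (Set α) :=
  {H | ∃ k, f.F k = H} ∪ {H | ∃ k, f.F' k = H}

end ActiveBij

namespace ActiveBij

section Aux

variable {α : Type*} {M : Matroid α} {B C C₁ C₂ F X I J J' : Set α} {e b f : α}

lemma Cct.dep (h : Cct M C) : M.Dep C := h.1

lemma Cct.subset_ground (h : Cct M C) : C ⊆ M.E := h.1.subset_ground

lemma Cct.ssubset_indep (h : Cct M C) (hX : X ⊂ C) : M.Indep X := by
  by_contra hXi
  have hXd : M.Dep X := ⟨hXi, hX.subset.trans h.subset_ground⟩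
  exact hX.ne (hX.subset.antisymm (h.2 hXd hX.subset))

lemma Cct.mem_closure_diff (h : Cct M C) (he : e ∈ C) : e ∈ M.closure (C \ {e}) := by
  have hI : M.Indep (C \ {e}) := h.ssubset_indep (sdiff_singleton_ssubset.2 he)
  have hd : M.Dep (insert e (C \ {e})) := by
    rw [insert_diff_singleton, insert_eq_of_mem he]
    exact h.dep
  exact (hI.insert_dep_iff.1 hd).1

lemma exists_cct_subset_aux : ∀ (n : ℕ) (X : Set α), X.Finite → X.ncard ≤ n → M.Dep X →
    ∃ C, Cct M C ∧ C ⊆ X := by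
  intro n
  induction n with
  | zero =>
    intro X hfin hcard hdep
    rw [Nat.le_zero, ncard_eq_zero hfin] at hcard
    exact absurd (hcard ▸ hdep) M.empty_indep.not_dep
  | succ n ih =>
    intro X hfin hcard hdep
    by_cases h : ∀ Y ⊂ X, ¬ M.Dep Y
    · refine ⟨X, ⟨hdep, fun Y hY hYX => ?_⟩, Subset.rfl⟩
      by_contra hne
      exact h Y (ssubset_of_subset_of_ne hYX (fun hEq => hne (hEq ▸ Subset.rfl))) hY
    · push_neg at h
      obtain ⟨Y, hYX, hYdep⟩ := h
      obtain ⟨C, hC, hCY⟩ := ih Y (hfin.subset hYX.subset)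
        (Nat.lt_succ_iff.1 (lt_of_lt_of_le (ncard_lt_ncard hYX hfin) hcard)) hYdep
      exact ⟨C, hC, hCY.trans hYX.subset⟩

lemma exists_cct [M.Finite] (hX : M.Dep X) : ∃ C, Cct M C ∧ C ⊆ X :=
  exists_cct_subset_aux X.ncard X (M.set_finite X hX.subset_ground) le_rfl hX

lemma cct_subset_of_subset_insert (hI : M.Indep I) (h₁ : Cct M C₁) (h₂ : Cct M C₂)
    (hC₁ : C₁ ⊆ insert e I) (hC₂ : C₂ ⊆ insert e I) : C₁ ⊆ C₂ := by
  have he₂ : e ∈ C₂ := by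
    by_contra he
    exact h₂.dep.not_indep (hI.subset (fun x hx => (hC₂ hx).resolve_left
      (fun hxe => he (hxe ▸ hx))))
  intro f hf
  by_contra hfC₂
  have hfe : f ≠ e := fun h => hfC₂ (h ▸ he₂)
  have hfI : f ∈ I := (hC₁ hf).resolve_left hfe
  have h1 : e ∈ M.closure (I \ {f}) := by
    refine M.closure_subset_closure ?_ (h₂.mem_closure_diff he₂)
    rintro x ⟨hx, hxe⟩
    exact ⟨(hC₂ hx).resolve_left hxe, fun h => hfC₂ (h ▸ hx)⟩
  have h2 : f ∈ M.closure (insert e (I \ {f})) := by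
    refine M.closure_subset_closure ?_ (h₁.mem_closure_diff hf)
    rintro x ⟨hx, hxf⟩
    rcases hC₁ hx with h | h
    · exact Or.inl h
    · exact Or.inr ⟨h, hxf⟩
  rw [closure_insert_eq_of_mem_closure h1] at h2
  exact hI.notMem_closure_diff_of_mem hfI h2

lemma cct_insert_eq (hI : M.Indep I) (h₁ : Cct M C₁) (h₂ : Cct M C₂)
    (hC₁ : C₁ ⊆ insert e I) (hC₂ : C₂ ⊆ insert e I) : C₁ = C₂ :=
  (cct_subset_of_subset_insert hI h₁ h₂ hC₁ hC₂).antisymm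
    (cct_subset_of_subset_insert hI h₂ h₁ hC₂ hC₁)

lemma fundCct_eq (hI : M.Indep B) (hC : Cct M C) (hCB : C ⊆ insert e B) :
    fundCct M B e = C := by
  have hset : {C' | Cct M C' ∧ C' ⊆ insert e B} = {C} := by
    ext C'
    simp only [mem_setOf_eq, mem_singleton_iff]
    exact ⟨fun h => cct_insert_eq hI h.1 hC h.2 hCB, fun h => h ▸ ⟨hC, hCB⟩⟩
  rw [fundCct, hset, sInter_singleton]

lemma fundCct_cct [M.Finite] (hB : M.IsBase B) (he : e ∈ M.E \ B) :
    Cct M (fundCct M B e) ∧ e ∈ fundCct M B e ∧ fundCct M B e ⊆ insert e B := by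
  obtain ⟨C, hC, hCB⟩ := exists_cct (hB.insert_dep he)
  have heC : e ∈ C := by
    by_contra h
    exact hC.dep.not_indep (hB.indep.subset (fun x hx => (hCB hx).resolve_left
      (fun hxe => h (hxe ▸ hx))))
  rw [fundCct_eq hB.indep hC hCB]
  exact ⟨hC, heC, hCB⟩

lemma cct_restrict_iff (hF : F ⊆ M.E) : Cct (M ↾ F) C ↔ Cct M C ∧ C ⊆ F := by
  constructor
  · rintro ⟨hdep, hmin⟩
    rw [restrict_dep_iff] at hdep
    refine ⟨⟨⟨hdep.1, hdep.2.trans hF⟩, fun Y hY hYC => ?_⟩, hdep.2⟩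
    exact hmin (restrict_dep_iff.2 ⟨hY.1, hYC.trans hdep.2⟩) hYC
  · rintro ⟨⟨hdep, hmin⟩, hCF⟩
    refine ⟨restrict_dep_iff.2 ⟨hdep.1, hCF⟩, fun Y hY hYC => ?_⟩
    rw [restrict_dep_iff] at hY
    exact hmin ⟨hY.1, hYC.trans hdep.subset_ground⟩ hYC

@[simp] lemma con_ground (M : Matroid α) (F : Set α) : (con M F).E = M.E \ F := rfl

lemma fundCocct_eq_dual (M : Matroid α) (B : Set α) (b : α) :
    fundCocct M B b = fundCct M✶ (M.E \ B) b := rfl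

lemma dual_restrict_base (hB : M.IsBase B) (hFE : F ⊆ M.E) (hBF : (M ↾ F).IsBase (B ∩ F)) :
    (M✶ ↾ (M.E \ F)).IsBase ((M.E \ B) ∩ (M.E \ F)) := by
  have hbasis : M.IsBasis (B ∩ F) F := by rwa [isBase_restrict_iff hFE] at hBF
  exact (hB.compl_inter_isBasis_of_inter_isBasis hbasis).restrict_isBase

lemma con_base (hB : M.IsBase B) (hFE : F ⊆ M.E) (hBF : (M ↾ F).IsBase (B ∩ F)) :
    (con M F).IsBase (B \ F) := by
  have h := dual_restrict_base hB hFE hBF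
  have hcon : con M F = (M✶ ↾ (M.E \ F))✶ := rfl
  have hsub : B \ F ⊆ (M✶ ↾ (M.E \ F)).E := by
    rw [restrict_ground_eq]
    exact fun x hx => ⟨hB.subset_ground hx.1, hx.2⟩
  rw [hcon, dual_isBase_iff hsub, restrict_ground_eq]
  have hset : (M.E \ F) \ (B \ F) = (M.E \ B) ∩ (M.E \ F) := by
    ext x; constructor
    · rintro ⟨⟨hxE, hxF⟩, hxBF⟩
      exact ⟨⟨hxE, fun hxB => hxBF ⟨hxB, hxF⟩⟩, hxE, hxF⟩
    · rintro ⟨⟨hxE, hxB⟩, _, hxF⟩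
      exact ⟨⟨hxE, hxF⟩, fun h => hxB h.1⟩
  rw [hset]
  exact h

lemma union_indep_exchange [M.Finite] (hJ : M.IsBasis J F) (hJ' : M.IsBasis J' F)
    (hXF : Disjoint X F) (hX : M.Indep (X ∪ J)) : M.Indep (X ∪ J') := by
  have hXE : X ⊆ M.E := subset_union_left.trans hX.subset_ground
  have hJ'E : J' ⊆ M.E := hJ'.indep.subset_ground
  have hclsub : ∀ J₀ : Set α, M.IsBasis J₀ F → X ∪ F ⊆ M.closure (X ∪ J₀) := by
    intro J₀ hJ₀
    refine union_subset ?_ ?_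
    · exact (M.subset_closure X hXE).trans (M.closure_subset_closure subset_union_left)
    · exact hJ₀.subset_closure.trans (M.closure_subset_closure subset_union_right)
  have h1 : M.IsBasis (X ∪ J) (X ∪ F) :=
    hX.isBasis_of_subset_of_subset_closure (union_subset_union_right _ hJ.subset) (hclsub J hJ)
  obtain ⟨K, hK⟩ := M.exists_isBasis (X ∪ J') (union_subset hXE hJ'E)
  have h2 : M.IsBasis K (X ∪ F) := by
    refine hK.indep.isBasis_of_subset_of_subset_closure
      (hK.subset.trans (union_subset_union_right _ hJ'.subset)) ?_
    rw [hK.closure_eq_closure]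
    exact hclsub J' hJ'
  have hcard : K.encard = (X ∪ J).encard := h2.encard_eq_encard h1
  have hJJ' : J.encard = J'.encard := hJ.encard_eq_encard hJ'
  have hXJ : (X ∪ J).encard = X.encard + J.encard :=
    encard_union_eq (hXF.mono_right hJ.subset)
  have hle : (X ∪ J').encard ≤ K.encard := by
    rw [hcard, hXJ, hJJ']
    exact encard_union_le X J'
  have hfin : (X ∪ J').Finite := M.set_finite _ (union_subset hXE hJ'E)
  rw [hfin.eq_of_subset_of_encard_le' hK.subset hle] at hK
  exact hK.indep

lemma con_indep_union [M.Finite] (hB : M.IsBase B) (hFE : F ⊆ M.E)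
    (hBF : (M ↾ F).IsBase (B ∩ F)) (hX : (con M F).Indep X) : M.Indep (X ∪ (B ∩ F)) := by
  have hXE : X ⊆ M.E \ F := hX.subset_ground
  have hX' : (M✶ ↾ (M✶.E \ F))✶.Indep X := hX
  rw [dual_indep_iff_exists'] at hX'
  obtain ⟨hXG, Bd, hBd, hdisj⟩ := hX'
  have hBd2 : (M✶ ↾ (M.E \ F)).IsBase Bd := hBd
  have hBdbasis : M✶.IsBasis Bd (M.E \ F) := by
    rwa [isBase_restrict_iff (show M.E \ F ⊆ M✶.E from diff_subset)] at hBd2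
  obtain ⟨B', hB', hBdB'⟩ := hBdbasis.exists_isBase
  have hB₀ : M.IsBase (M.E \ B') := hB'.compl_isBase_of_dual
  have hXB' : Disjoint X B' := by
    rw [disjoint_left]
    intro x hxX hxB'
    exact hdisj.le_bot ⟨hxX, hBdB' ▸ ⟨hxB', hXE hxX⟩⟩
  have hXsub : X ⊆ (M.E \ B') \ F :=
    fun x hx => ⟨⟨(hXE hx).1, fun h => hXB'.le_bot ⟨hx, h⟩⟩, (hXE hx).2⟩
  have hbasisF : M.IsBasis ((M.E \ B') ∩ F) F := by
    rw [hB₀.inter_isBasis_iff_compl_inter_isBasis_dual hFE,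
      diff_diff_cancel_left (show B' ⊆ M.E from hB'.subset_ground), ← hBdB']
    exact hBdbasis
  have hind : M.Indep (((M.E \ B') \ F) ∪ ((M.E \ B') ∩ F)) := by
    have hu : ((M.E \ B') \ F) ∪ ((M.E \ B') ∩ F) = M.E \ B' := diff_union_inter _ _
    rw [hu]
    exact hB₀.indep
  have hBbasis : M.IsBasis (B ∩ F) F := by rwa [isBase_restrict_iff hFE] at hBF
  have hres := union_indep_exchange hbasisF hBbasis disjoint_sdiff_left hind
  exact hres.subset (union_subset_union_left _ hXsub)

lemma con_dep [M.Finite] (hB : M.IsBase B) (hFE : F ⊆ M.E) (hBF : (M ↾ F).IsBase (B ∩ F))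
    (hXF : X ⊆ M.E \ F) (hdep : M.Dep (X ∪ (B ∩ F))) : (con M F).Dep X := by
  rw [dep_iff, con_ground]
  exact ⟨fun hind => hdep.not_indep (con_indep_union hB hFE hBF hind), hXF⟩

lemma con_dual_compl (hFE : F ⊆ M.E) : con M✶ (M.E \ F) = (M ↾ F)✶ := by
  show (del M✶✶ (M.E \ F))✶ = (M ↾ F)✶
  rw [del, dual_dual, diff_diff_cancel_left hFE]

lemma factA [M.Finite] (hB : M.IsBase B) (hFE : F ⊆ M.E) (hBF : (M ↾ F).IsBase (B ∩ F))
    (he : e ∈ F \ B) :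
    Cct M (fundCct M B e) ∧ e ∈ fundCct M B e ∧ fundCct M B e ⊆ F := by
  haveI : (M ↾ F).Finite := restrict_finite (M.set_finite F hFE)
  have heR : e ∈ (M ↾ F).E \ (B ∩ F) := ⟨he.1, fun h => he.2 h.1⟩
  obtain ⟨hC, heC, hCsub⟩ := fundCct_cct hBF heR
  rw [cct_restrict_iff hFE] at hC
  have hCB : fundCct (M ↾ F) (B ∩ F) e ⊆ insert e B :=
    hCsub.trans (insert_subset_insert inter_subset_left)
  rw [fundCct_eq hB.indep hC.1 hCB]
  exact ⟨hC.1, heC, hC.2⟩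

lemma factC [M.Finite] (hB : M.IsBase B) (hFE : F ⊆ M.E) (hBF : (M ↾ F).IsBase (B ∩ F))
    (he : e ∈ M.E \ (B ∪ F)) :
    e ∈ fundCct (con M F) (B \ F) e ∧ fundCct (con M F) (B \ F) e ⊆ fundCct M B e ∧
      Disjoint (fundCct (con M F) (B \ F) e) F := by
  haveI : (con M F).Finite := ⟨(con_ground M F ▸ (M.ground_finite.diff (t := F)) : ((con M F).E).Finite)⟩
  have hNbase := con_base hB hFE hBF
  have heN : e ∈ (con M F).E \ (B \ F) := by
    rw [con_ground]
    exact ⟨⟨he.1, fun h => he.2 (Or.inr h)⟩, fun h => he.2 (Or.inl h.1)⟩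
  obtain ⟨hD, heD, hDsub⟩ := fundCct_cct hNbase heN
  have heB : e ∈ M.E \ B := ⟨he.1, fun h => he.2 (Or.inl h)⟩
  obtain ⟨hC, heC, hCsub⟩ := fundCct_cct hB heB
  have heF : e ∉ F := fun h => he.2 (Or.inr h)
  have hCFsub : fundCct M B e \ F ⊆ M.E \ F := diff_subset_diff_left hC.subset_ground
  have hCdep : M.Dep ((fundCct M B e \ F) ∪ (B ∩ F)) := by
    refine hC.dep.superset (fun x hx => ?_)
      (union_subset (hCFsub.trans diff_subset) (inter_subset_left.trans hB.subset_ground))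
    by_cases hxF : x ∈ F
    · refine Or.inr ⟨(hCsub hx).resolve_left ?_, hxF⟩
      rintro rfl; exact heF hxF
    · exact Or.inl ⟨hx, hxF⟩
  have hNdep := con_dep hB hFE hBF hCFsub hCdep
  obtain ⟨D', hD', hD'sub⟩ := exists_cct hNdep
  have hD'insert : D' ⊆ insert e (B \ F) := by
    refine hD'sub.trans (fun x hx => ?_)
    rcases hCsub hx.1 with h | h
    · exact Or.inl h
    · exact Or.inr ⟨h, hx.2⟩
  have heq : fundCct (con M F) (B \ F) e = D' := fundCct_eq hNbase.indep hD' hD'insert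
  refine ⟨heD, ?_, ?_⟩
  · rw [heq]; exact hD'sub.trans diff_subset
  · rw [heq]; exact disjoint_sdiff_left.mono_left hD'sub

lemma fundCocct_cct [M.Finite] (hB : M.IsBase B) (hb : b ∈ B) :
    Cct M✶ (fundCocct M B b) ∧ b ∈ fundCocct M B b ∧
      fundCocct M B b ⊆ insert b (M.E \ B) := by
  haveI : M✶.Finite := ⟨M.ground_finite⟩
  exact fundCct_cct (M := M✶) hB.compl_isBase_dual
    (e := b) ⟨hB.subset_ground hb, fun h => h.2 hb⟩

lemma factB [M.Finite] (hB : M.IsBase B) (hFE : F ⊆ M.E) (hBF : (M ↾ F).IsBase (B ∩ F))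
    (hb : b ∈ B \ F) : Disjoint (fundCocct M B b) F := by
  haveI : M✶.Finite := ⟨M.ground_finite⟩
  have hB' : M✶.IsBase (M.E \ B) := hB.compl_isBase_dual
  have hBF' : (M✶ ↾ (M.E \ F)).IsBase ((M.E \ B) ∩ (M.E \ F)) := dual_restrict_base hB hFE hBF
  have hb' : b ∈ (M.E \ F) \ (M.E \ B) :=
    ⟨⟨hB.subset_ground hb.1, hb.2⟩, fun h => h.2 hb.1⟩
  have h := factA (M := M✶) hB' (show M.E \ F ⊆ M✶.E from diff_subset)
    (show (M✶ ↾ (M.E \ F)).IsBase ((M.E \ B) ∩ (M.E \ F)) from hBF') hb'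
  rw [fundCocct_eq_dual]
  exact disjoint_sdiff_left.mono_left h.2.2

lemma factCstar [M.Finite] (hB : M.IsBase B) (hFE : F ⊆ M.E) (hBF : (M ↾ F).IsBase (B ∩ F))
    (hb : b ∈ B ∩ F) :
    b ∈ fundCocct (M ↾ F) (B ∩ F) b ∧
      fundCocct (M ↾ F) (B ∩ F) b ⊆ fundCocct M B b ∧
      fundCocct (M ↾ F) (B ∩ F) b ⊆ F := by
  haveI : M✶.Finite := ⟨M.ground_finite⟩
  have hB' : M✶.IsBase (M.E \ B) := hB.compl_isBase_dual
  have hBF' : (M✶ ↾ (M.E \ F)).IsBase ((M.E \ B) ∩ (M.E \ F)) := dual_restrict_base hB hFE hBF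
  have hb' : b ∈ M✶.E \ ((M.E \ B) ∪ (M.E \ F)) := by
    refine ⟨hB.subset_ground hb.1, ?_⟩
    rintro (h | h)
    · exact h.2 hb.1
    · exact h.2 hb.2
  have h := factC (M := M✶) hB' (show M.E \ F ⊆ M✶.E from diff_subset) hBF' hb'
  have hset : (M.E \ B) \ (M.E \ F) = F \ (B ∩ F) := by
    ext x; constructor
    · rintro ⟨⟨hxE, hxB⟩, hx⟩
      have hxF : x ∈ F := by
        by_contra hxF
        exact hx ⟨hxE, hxF⟩
      exact ⟨hxF, fun hc => hxB hc.1⟩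
    · rintro ⟨hxF, hx⟩
      exact ⟨⟨hFE hxF, fun hxB => hx ⟨hxB, hxF⟩⟩, fun hc => hc.2 hxF⟩
  have hfund : fundCct (con M✶ (M.E \ F)) ((M.E \ B) \ (M.E \ F)) b
      = fundCocct (M ↾ F) (B ∩ F) b := by
    rw [con_dual_compl hFE, hset]
    rfl
  rw [hfund, ← fundCocct_eq_dual] at h
  obtain ⟨h1, h2, h3⟩ := h
  refine ⟨h1, h2, fun x hx => ?_⟩
  have hxE : x ∈ M.E := (fundCocct_cct hB hb.1).1.subset_ground (h2 hx)
  by_contra hxF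
  exact h3.le_bot ⟨hx, hxE, hxF⟩

end Aux

/-- The external part of a base is the unique subset of the ground set satisfying the
single-pass recursive characterization via fundamental circuits and cocircuits. -/
theorem stmt5 {α : Type*} [LinearOrder α] (M : Matroid α) [M.Finite]
    (B : Set α) (hB : M.IsBase B) (F : Set α)
    (hF : DecompSet M B (ActInt M B) F) :
    ((∀ e ∈ B, (e ∈ F ↔ ∃ c ∈ fundCocct M B e, c < e ∧ c ∈ F)) ∧
      (∀ e ∈ M.E \ B, (e ∈ F ↔ ∀ c ∈ fundCct M B e, c < e → c ∈ F))) ∧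
    ∀ G ⊆ M.E,
      ((∀ e ∈ B, (e ∈ G ↔ ∃ c ∈ fundCocct M B e, c < e ∧ c ∈ G)) ∧
        (∀ e ∈ M.E \ B, (e ∈ G ↔ ∀ c ∈ fundCct M B e, c < e → c ∈ G))) →
      G = F := by
  obtain ⟨hFE, hBF, hInt, _, _, hExtC⟩ := hF
  rw [diff_self] at hInt
  have hmain1 : ∀ e ∈ B, (e ∈ F ↔ ∃ c ∈ fundCocct M B e, c < e ∧ c ∈ F) := by
    intro e heB
    constructor
    · intro heF
      have hbF : e ∈ B ∩ F := ⟨heB, heF⟩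
      obtain ⟨hmem, hsub, hsubF⟩ := factCstar hB hFE hBF hbF
      have hnotin : e ∉ ActInt (M ↾ F) (B ∩ F) := by
        rw [hInt]; exact notMem_empty e
      have hnl : ¬ e ∈ lowerBounds (fundCocct (M ↾ F) (B ∩ F) e) :=
        fun hlb => hnotin ⟨hbF, hmem, hlb⟩
      simp only [lowerBounds, mem_setOf_eq, not_forall] at hnl
      obtain ⟨c, hc, hce⟩ := hnl
      exact ⟨c, hsub hc, lt_of_not_ge hce, hsubF hc⟩
    · rintro ⟨c, hcC, _, hcF⟩
      by_contra heF
      exact (factB hB hFE hBF ⟨heB, heF⟩).le_bot ⟨hcC, hcF⟩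
  have hmain2 : ∀ e ∈ M.E \ B, (e ∈ F ↔ ∀ c ∈ fundCct M B e, c < e → c ∈ F) := by
    intro e heEB
    constructor
    · intro heF
      obtain ⟨_, _, hsub⟩ := factA hB hFE hBF ⟨heF, heEB.2⟩
      exact fun c hc _ => hsub hc
    · intro hall
      by_contra heF
      have heN : e ∈ M.E \ (B ∪ F) := ⟨heEB.1, fun h => h.elim heEB.2 heF⟩
      obtain ⟨hmem, hsub, hdisj⟩ := factC hB hFE hBF heN
      have hnotin : e ∉ ActExt (con M F) (B \ F) := by
        rw [hExtC]; exact notMem_empty e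
      have heNE : e ∈ (con M F).E \ (B \ F) := by
        rw [con_ground]
        exact ⟨⟨heEB.1, heF⟩, fun h => heEB.2 h.1⟩
      have hnl : ¬ e ∈ lowerBounds (fundCct (con M F) (B \ F) e) :=
        fun hlb => hnotin ⟨heNE, hmem, hlb⟩
      simp only [lowerBounds, mem_setOf_eq, not_forall] at hnl
      obtain ⟨c, hc, hce⟩ := hnl
      exact hdisj.le_bot ⟨hc, hall c (hsub hc) (lt_of_not_ge hce)⟩
  refine ⟨⟨hmain1, hmain2⟩, fun G hGE ⟨hGB, hGnB⟩ => ?_⟩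
  have key : ∀ x : M.E, ((x : α) ∈ G ↔ (x : α) ∈ F) := by
    haveI := M.ground_finite.to_subtype
    haveI : WellFoundedLT ↥M.E := Finite.to_wellFoundedLT
    intro x
    refine wellFounded_lt.induction (C := fun z : M.E => ((z : α) ∈ G ↔ (z : α) ∈ F)) x ?_
    rintro ⟨y, hy⟩ ih
    by_cases hyB : y ∈ B
    · rw [hGB y hyB, hmain1 y hyB]
      have hCg : fundCocct M B y ⊆ M.E := (fundCocct_cct hB hyB).1.subset_ground
      constructor
      · rintro ⟨c, hc, hlt, hcG⟩
        exact ⟨c, hc, hlt, (ih ⟨c, hCg hc⟩ hlt).1 hcG⟩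
      · rintro ⟨c, hc, hlt, hcF⟩
        exact ⟨c, hc, hlt, (ih ⟨c, hCg hc⟩ hlt).2 hcF⟩
    · rw [hGnB y ⟨hy, hyB⟩, hmain2 y ⟨hy, hyB⟩]
      have hCg : fundCct M B y ⊆ M.E := (fundCct_cct hB ⟨hy, hyB⟩).1.subset_ground
      constructor
      · intro hall c hc hlt
        exact (ih ⟨c, hCg hc⟩ hlt).1 (hall c hc hlt)
      · intro hall c hc hlt
        exact (ih ⟨c, hCg hc⟩ hlt).2 (hall c hc hlt)
  ext x
  constructor
  · intro hx
    exact (key ⟨x, hGE hx⟩).1 hx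
  · intro hx
    exact (key ⟨x, hFE hx⟩).2 hx

end ActiveBij
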